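/- arXiv:1908.02801 — 2 statements merged into one kernel-verified Lean document; each statement's English description precedes it below -/
import Mathlib

section
/- There exists a SIC in ℂ²: there exists a unit-norm vector v ∈ ℂ² such that |⟨v, M^ℓ T^k v⟩|² = 1/3 for all (k,ℓ) ∈ {0,1}² with (k,ℓ) ≠ (0,0). -/
open scoped ComplexConjugate

/-- The translation operator `T` on `ℂ^d = (ZMod d → ℂ)`: `(T v) j = v (j - 1)`. -/
noncomputable def gT (d : ℕ) : (ZMod d → ℂ) ≃ₗ[ℂ] (ZMod d → ℂ) :=
  LinearEquiv.funCongrLeft ℂ ℂ (Equiv.subRight (1 : ZMod d))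

/-- The modulation operator `M` on `ℂ^d`: `(M v) j = ω ^ j * v j` with `ω = exp (2 π i / d)`. -/
noncomputable def gM (d : ℕ) : (ZMod d → ℂ) ≃ₗ[ℂ] (ZMod d → ℂ) :=
  LinearEquiv.piCongrRight fun j =>
    LinearEquiv.smulOfNeZero ℂ ℂ (Complex.exp (2 * Real.pi * Complex.I / d) ^ j.val)
      (pow_ne_zero _ (Complex.exp_ne_zero _))

/-- The standard inner product on `ℂ^d`, conjugate-linear in the first argument. -/
noncomputable def inn {d : ℕ} [NeZero d] (u w : ZMod d → ℂ) : ℂ :=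
  ∑ j : ZMod d, conj (u j) * w j

/-- The Gabor system `G(v) = {M^ℓ T^k v}` is `(α, β)`-biangular:
`|⟨v, T^k v⟩|² = α` for `k ∈ {1,…,d-1}` and `|⟨v, M^ℓ T^k v⟩|² = β` for
`k ∈ {0,…,d-1}`, `ℓ ∈ {1,…,d-1}`. -/
def Biangular (d : ℕ) [NeZero d] (v : ZMod d → ℂ) (α β : ℝ) : Prop :=
  (∀ k : ℕ, 1 ≤ k → k ≤ d - 1 → ‖inn v ((gT d ^ k) v)‖ ^ 2 = α) ∧
  (∀ k ℓ : ℕ, k ≤ d - 1 → 1 ≤ ℓ → ℓ ≤ d - 1 →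
    ‖inn v ((gM d ^ ℓ) ((gT d ^ k) v))‖ ^ 2 = β)

/-- `B_d`: the set of nonzero `v ∈ ℂ^d` whose Gabor system is biangular. -/
def Bset (d : ℕ) [NeZero d] : Set (ZMod d → ℂ) :=
  {v | v ≠ 0 ∧ ∃ α β : ℝ, Biangular d v α β}

lemma hω : Complex.exp (2 * Real.pi * Complex.I / (2:ℕ)) = -1 := by
  rw [show (2 * Real.pi * Complex.I / ((2:ℕ):ℂ) : ℂ) = Real.pi * Complex.I by push_cast; ring,
    Complex.exp_pi_mul_I]

lemma gT_apply (v : ZMod 2 → ℂ) (j : ZMod 2) : (gT 2) v j = v (j - 1) := rfl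
lemma gM_apply (v : ZMod 2 → ℂ) (j : ZMod 2) : (gM 2) v j = (-1 : ℂ) ^ j.val * v j := by
  rw [show (gM 2) v j = Complex.exp (2 * Real.pi * Complex.I / (2:ℕ)) ^ j.val * v j from rfl, hω]

lemma inn_expand (u w : ZMod 2 → ℂ) : inn u w = conj (u 0) * w 0 + conj (u 1) * w 1 :=
  Fin.sum_univ_two _

/-- there exists a SIC in `ℂ²`. -/
theorem sic_exists_dim_two :
    ∃ v : ZMod 2 → ℂ, (∑ j, ‖v j‖ ^ 2 = 1) ∧
      ∀ k ℓ : ℕ, k ≤ 1 → ℓ ≤ 1 → ¬(k = 0 ∧ ℓ = 0) →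
        ‖inn v ((gM 2 ^ ℓ) ((gT 2 ^ k) v))‖ ^ 2 = 1 / 3 := by
  set s := Real.sqrt 3 with hs
  have hs0 : 0 ≤ s := Real.sqrt_nonneg 3
  have hs2 : s ^ 2 = 3 := Real.sq_sqrt (by norm_num)
  have hs3 : s ≤ 3 := by nlinarith
  set a := Real.sqrt ((3 + s) / 6) with hadef
  set c := Real.sqrt ((3 - s) / 12) with hcdef
  have ha2 : a ^ 2 = (3 + s) / 6 := Real.sq_sqrt (by linarith)
  have hc2 : c ^ 2 = (3 - s) / 12 := Real.sq_sqrt (by linarith)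
  set v : ZMod 2 → ℂ := fun j => if j = 0 then (a : ℂ) else (c : ℂ) * (1 + Complex.I) with hv
  have hv0 : v 0 = (a : ℂ) := rfl
  have hv1 : v 1 = (c : ℂ) * (1 + Complex.I) := by simp [hv]
  refine ⟨v, ?_, ?_⟩
  · have hsum : (∑ j : ZMod 2, ‖v j‖ ^ 2)
        = ‖v 0‖ ^ 2 + ‖v 1‖ ^ 2 := Fin.sum_univ_two _
    rw [hsum, hv0, hv1, Complex.sq_norm, Complex.sq_norm, Complex.normSq_apply,
      Complex.normSq_apply]
    simp only [Complex.add_re, Complex.add_im, Complex.mul_re, Complex.mul_im,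
      Complex.ofReal_re, Complex.ofReal_im, Complex.I_re, Complex.I_im, Complex.one_re,
      Complex.one_im]
    linear_combination ha2 + 2 * hc2
  · intro k ℓ hk hℓ hne
    interval_cases k <;> interval_cases ℓ
    · exact absurd ⟨rfl, rfl⟩ hne
    · -- k = 0, ℓ = 1
      rw [pow_zero, pow_one]
      simp only [LinearEquiv.coe_one, id_eq]
      rw [ inn_expand, gM_apply, gM_apply, hv0, hv1]
      rw [Complex.sq_norm, Complex.normSq_apply]
      simp only [Complex.add_re, Complex.add_im, Complex.mul_re, Complex.mul_im,
        Complex.ofReal_re, Complex.ofReal_im, Complex.I_re, Complex.I_im, Complex.one_re,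
        Complex.one_im, Complex.conj_re, Complex.conj_im, Complex.neg_re, Complex.neg_im,
        ZMod.val_zero, ZMod.val_one, pow_zero, pow_one, one_mul, neg_mul]
      linear_combination (a^2 - 2*c^2 + s/3) * ha2 - 2*(a^2 - 2*c^2 + s/3) * hc2 + (1/9) * hs2
    · -- k = 1, ℓ = 0
      rw [pow_one, pow_zero]
      simp only [LinearEquiv.coe_one, id_eq]
      rw [ inn_expand, gT_apply, gT_apply,
        show (0 : ZMod 2) - 1 = 1 by decide, show (1 : ZMod 2) - 1 = 0 by decide, hv0, hv1]
      rw [Complex.sq_norm, Complex.normSq_apply]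
      simp only [Complex.add_re, Complex.add_im, Complex.mul_re, Complex.mul_im,
        Complex.ofReal_re, Complex.ofReal_im, Complex.I_re, Complex.I_im, Complex.one_re,
        Complex.one_im, Complex.conj_re, Complex.conj_im]
      linear_combination 4 * c^2 * ha2 + ((3+s)*2/3) * hc2 - (1/18) * hs2
    · -- k = 1, ℓ = 1
      rw [pow_one, pow_one, inn_expand, gM_apply, gM_apply, gT_apply, gT_apply,
        show (0 : ZMod 2) - 1 = 1 by decide, show (1 : ZMod 2) - 1 = 0 by decide, hv0, hv1]
      rw [Complex.sq_norm, Complex.normSq_apply]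
      simp only [Complex.add_re, Complex.add_im, Complex.mul_re, Complex.mul_im,
        Complex.ofReal_re, Complex.ofReal_im, Complex.I_re, Complex.I_im, Complex.one_re,
        Complex.one_im, Complex.conj_re, Complex.conj_im, Complex.neg_re, Complex.neg_im,
        ZMod.val_zero, ZMod.val_one, pow_zero, pow_one, one_mul, neg_mul]
      linear_combination 4 * c^2 * ha2 + ((3+s)*2/3) * hc2 - (1/18) * hs2
end

section
/- Let d ≥ 2 and let v ∈ ℂ^d with ‖v‖₂ = 1. If G(v) is (α,β)-biangular, then β - α = (1 - (d+1)α)/d. Consequently, β > α if and only if α < 1/(d+1), and β < α if and only if α > 1/(d+1). -/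
open scoped ComplexConjugate

open Finset

lemma gT_pow_apply (d k : ℕ) (v : ZMod d → ℂ) (j : ZMod d) :
    (gT d ^ k) v j = v (j - k) := by
  induction k generalizing j with
  | zero => simp
  | succ n ih =>
    rw [pow_succ']
    have : (gT d * gT d ^ n) v j = (gT d ^ n) v (j - 1) := rfl
    rw [this, ih]
    push_cast
    ring_nf

lemma gM_pow_apply (d ℓ : ℕ) (v : ZMod d → ℂ) (j : ZMod d) :
    (gM d ^ ℓ) v j = (Complex.exp (2 * Real.pi * Complex.I / d) ^ j.val) ^ ℓ * v j := by
  induction ℓ with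
  | zero => simp
  | succ n ih =>
    rw [pow_succ']
    have : (gM d * gM d ^ n) v j
        = Complex.exp (2 * Real.pi * Complex.I / d) ^ j.val * ((gM d ^ n) v j) := rfl
    rw [this, ih]
    ring

lemma conj_omega_pow (d m : ℕ) :
    conj (Complex.exp (2 * Real.pi * Complex.I / d) ^ m)
      = (Complex.exp (2 * Real.pi * Complex.I / d) ^ m)⁻¹ := by
  rw [map_pow, ← inv_pow]
  congr 1
  rw [← Complex.exp_conj, ← Complex.exp_neg]
  congr 1
  simp [Complex.ext_iff, neg_div]

lemma char_sum (d : ℕ) [NeZero d] (i j : ZMod d) :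
    ∑ ℓ ∈ range d, (Complex.exp (2 * Real.pi * Complex.I / d) ^ i.val) ^ ℓ *
      conj ((Complex.exp (2 * Real.pi * Complex.I / d) ^ j.val) ^ ℓ)
      = if i = j then (d : ℂ) else 0 := by
  have hd : d ≠ 0 := NeZero.ne d
  set ω := Complex.exp (2 * Real.pi * Complex.I / d) with hω
  have hprim : IsPrimitiveRoot ω d := Complex.isPrimitiveRoot_exp d hd
  have hne : ω ^ j.val ≠ 0 := pow_ne_zero _ (Complex.exp_ne_zero _)
  have hterm : ∀ ℓ : ℕ, (ω ^ i.val) ^ ℓ * conj ((ω ^ j.val) ^ ℓ)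
      = (ω ^ i.val / ω ^ j.val) ^ ℓ := by
    intro ℓ
    have hc : conj ((ω ^ j.val) ^ ℓ) = ((ω ^ j.val) ^ ℓ)⁻¹ := by
      rw [← pow_mul]; exact conj_omega_pow d (j.val * ℓ)
    rw [hc, div_pow, div_eq_mul_inv]
  simp only [hterm]
  by_cases hij : i = j
  · subst hij
    simp [div_self hne]
  · rw [if_neg hij]
    set ζ := ω ^ i.val / ω ^ j.val with hζ
    have hζ1 : ζ ≠ 1 := by
      intro hc
      apply hij
      have : ω ^ i.val = ω ^ j.val := by
        rw [hζ, div_eq_one_iff_eq hne] at hc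
        exact hc
      have := hprim.pow_inj (ZMod.val_lt i) (ZMod.val_lt j) this
      exact ZMod.val_injective d this
    have hζd : ζ ^ d = 1 := by
      rw [hζ, div_pow, ← pow_mul, ← pow_mul, mul_comm i.val d, mul_comm j.val d,
        pow_mul, pow_mul, hprim.pow_eq_one, one_pow, one_pow, div_self one_ne_zero]
    rw [geom_sum_eq hζ1, hζd]
    simp

lemma parseval (d : ℕ) [NeZero d] (f : ZMod d → ℂ) :
    ∑ ℓ ∈ range d,
      (∑ j : ZMod d, f j * (Complex.exp (2 * Real.pi * Complex.I / d) ^ j.val) ^ ℓ) *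
      conj (∑ j : ZMod d, f j * (Complex.exp (2 * Real.pi * Complex.I / d) ^ j.val) ^ ℓ)
      = d * ∑ j : ZMod d, f j * conj (f j) := by
  set ω := Complex.exp (2 * Real.pi * Complex.I / d) with hω
  calc
    ∑ ℓ ∈ range d, (∑ j : ZMod d, f j * (ω ^ j.val) ^ ℓ) *
        conj (∑ j : ZMod d, f j * (ω ^ j.val) ^ ℓ)
        = ∑ ℓ ∈ range d, ∑ j : ZMod d, ∑ j' : ZMod d,
          (f j * conj (f j')) * ((ω ^ j.val) ^ ℓ * conj ((ω ^ j'.val) ^ ℓ)) := by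
      refine sum_congr rfl fun ℓ _ => ?_
      rw [map_sum, sum_mul_sum]
      refine sum_congr rfl fun j _ => sum_congr rfl fun j' _ => ?_
      rw [map_mul]; ring
    _ = ∑ j : ZMod d, ∑ j' : ZMod d,
          (f j * conj (f j')) * ∑ ℓ ∈ range d, (ω ^ j.val) ^ ℓ * conj ((ω ^ j'.val) ^ ℓ) := by
      rw [sum_comm]
      refine sum_congr rfl fun j _ => ?_
      rw [sum_comm]
      refine sum_congr rfl fun j' _ => ?_
      rw [mul_sum]
    _ = ∑ j : ZMod d, ∑ j' : ZMod d,
          (f j * conj (f j')) * (if j = j' then (d : ℂ) else 0) := by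
      refine sum_congr rfl fun j _ => sum_congr rfl fun j' _ => ?_
      rw [char_sum]
    _ = ∑ j : ZMod d, (f j * conj (f j)) * d := by
      refine sum_congr rfl fun j _ => ?_
      simp [mul_ite]
    _ = d * ∑ j : ZMod d, f j * conj (f j) := by
      rw [← sum_mul]; ring

lemma sum_range_zmod (d : ℕ) [NeZero d] (g : ZMod d → ℂ) :
    ∑ k ∈ range d, g (k : ZMod d) = ∑ x : ZMod d, g x := by
  refine Finset.sum_nbij' (fun k => ((k : ZMod d))) (fun x => x.val) ?_ ?_ ?_ ?_ ?_
  · intro a _; exact mem_univ _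
  · intro x _; exact mem_range.2 (ZMod.val_lt x)
  · intro a ha; exact ZMod.val_natCast_of_lt (mem_range.1 ha)
  · intro x _; exact ZMod.natCast_rightInverse x
  · intro a _; rfl

lemma inn_eq (d : ℕ) [NeZero d] (v : ZMod d → ℂ) (k ℓ : ℕ) :
    inn v ((gM d ^ ℓ) ((gT d ^ k) v))
      = ∑ j : ZMod d, (conj (v j) * v (j - k)) *
        (Complex.exp (2 * Real.pi * Complex.I / d) ^ j.val) ^ ℓ := by
  unfold inn
  refine sum_congr rfl fun j _ => ?_
  rw [gM_pow_apply, gT_pow_apply]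
  ring

lemma total_sum (d : ℕ) [NeZero d] (v : ZMod d → ℂ)
    (hv : ∑ j, ‖v j‖ ^ 2 = 1) :
    ∑ k ∈ range d, ∑ ℓ ∈ range d,
      inn v ((gM d ^ ℓ) ((gT d ^ k) v)) * conj (inn v ((gM d ^ ℓ) ((gT d ^ k) v)))
      = (d : ℂ) := by
  have hs : ∑ j : ZMod d, conj (v j) * v j = 1 := by
    have : ∀ j : ZMod d, conj (v j) * v j = ((‖v j‖ ^ 2 : ℝ) : ℂ) := by
      intro j
      rw [Complex.sq_norm]
      rw [Complex.normSq_eq_conj_mul_self]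
    rw [Finset.sum_congr rfl fun j _ => this j, ← Complex.ofReal_sum, hv,
      Complex.ofReal_one]
  have step : ∀ k : ℕ, ∑ ℓ ∈ range d,
      inn v ((gM d ^ ℓ) ((gT d ^ k) v)) * conj (inn v ((gM d ^ ℓ) ((gT d ^ k) v)))
      = (d : ℂ) * ∑ j : ZMod d, (conj (v j) * v j) * (conj (v (j - k)) * v (j - k)) := by
    intro k
    have := parseval d (fun j => conj (v j) * v (j - k))
    simp only [inn_eq]
    rw [this]
    congr 1
    refine sum_congr rfl fun j _ => ?_
    simp only [map_mul, RingHom.coe_coe, Complex.conj_conj]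
    ring
  simp only [step]
  have hinner : ∀ j : ZMod d,
      ∑ k ∈ range d, (conj (v (j - k)) * v (j - k)) = 1 := by
    intro j
    rw [sum_range_zmod d (fun x => conj (v (j - x)) * v (j - x))]
    exact (Fintype.sum_equiv (Equiv.subLeft j)
      (fun x => conj (v (j - x)) * v (j - x)) (fun y => conj (v y) * v y)
      (fun x => rfl)).trans hs
  calc
    ∑ k ∈ range d, (d : ℂ) * ∑ j : ZMod d,
        (conj (v j) * v j) * (conj (v (j - k)) * v (j - k))
        = (d : ℂ) * ∑ j : ZMod d, (conj (v j) * v j) *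
          ∑ k ∈ range d, (conj (v (j - k)) * v (j - k)) := by
      rw [← mul_sum, sum_comm]
      congr 1
      refine sum_congr rfl fun j _ => ?_
      rw [mul_sum]
    _ = (d : ℂ) := by
      simp only [hinner, mul_one, hs]

/-- for unit-norm `v` with `G(v)` `(α, β)`-biangular,
`β - α = (1 - (d + 1) α) / d`; consequently `α < β ↔ α < 1/(d+1)` and
`β < α ↔ 1/(d+1) < α`. -/
theorem biangular_angle_gap (d : ℕ) [NeZero d] (hd : 2 ≤ d) (v : ZMod d → ℂ)
    (hv : ∑ j, ‖v j‖ ^ 2 = 1) (α β : ℝ) (h : Biangular d v α β) :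
    β - α = (1 - (d + 1) * α) / d ∧ (α < β ↔ α < 1 / (d + 1)) ∧
      (β < α ↔ 1 / (d + 1) < α) := by
  have hd0 : d ≠ 0 := NeZero.ne d
  have hd0R : (0 : ℝ) < d := by positivity
  -- the real total sum
  have habs : ∀ k ℓ : ℕ,
      inn v ((gM d ^ ℓ) ((gT d ^ k) v)) * conj (inn v ((gM d ^ ℓ) ((gT d ^ k) v)))
      = ((‖inn v ((gM d ^ ℓ) ((gT d ^ k) v))‖ ^ 2 : ℝ) : ℂ) := by
    intro k ℓ
    rw [Complex.sq_norm, Complex.mul_conj]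
  have hreal : ∑ k ∈ range d, ∑ ℓ ∈ range d,
      ‖inn v ((gM d ^ ℓ) ((gT d ^ k) v))‖ ^ 2 = (d : ℝ) := by
    have := total_sum d v hv
    rw [Finset.sum_congr rfl (fun k _ => Finset.sum_congr rfl fun ℓ _ => habs k ℓ)] at this
    have h2 : ((∑ k ∈ range d, ∑ ℓ ∈ range d,
        ‖inn v ((gM d ^ ℓ) ((gT d ^ k) v))‖ ^ 2 : ℝ) : ℂ) = ((d : ℝ) : ℂ) := by
      push_cast
      rw [← this]
      norm_num
    exact_mod_cast h2
  -- value of the (0,0) term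
  have hs : inn v v = 1 := by
    unfold inn
    have : ∀ j : ZMod d, conj (v j) * v j = ((‖v j‖ ^ 2 : ℝ) : ℂ) := by
      intro j
      rw [Complex.sq_norm, Complex.normSq_eq_conj_mul_self]
    rw [Finset.sum_congr rfl fun j _ => this j, ← Complex.ofReal_sum, hv,
      Complex.ofReal_one]
  -- split the sum
  have hsplit : ∑ k ∈ range d, ∑ ℓ ∈ range d,
      ‖inn v ((gM d ^ ℓ) ((gT d ^ k) v))‖ ^ 2
      = 1 + (d - 1 : ℕ) * α + d * ((d - 1 : ℕ) * β) := by
    have hinnersum : ∀ k ∈ range d, ∑ ℓ ∈ range d,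
        ‖inn v ((gM d ^ ℓ) ((gT d ^ k) v))‖ ^ 2
        = ‖inn v ((gT d ^ k) v)‖ ^ 2 + (d - 1 : ℕ) * β := by
      intro k hk
      rw [range_eq_Ico, Finset.sum_eq_sum_Ico_succ_bot (Nat.pos_of_ne_zero hd0)]
      have h1 : (gM d ^ 0) ((gT d ^ k) v) = (gT d ^ k) v := by rw [pow_zero]; rfl
      have hβs : ∑ ℓ ∈ Ico (0 + 1) d,
          ‖inn v ((gM d ^ ℓ) ((gT d ^ k) v))‖ ^ 2 = ((d - 1 : ℕ) : ℝ) * β := by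
        rw [Finset.sum_congr rfl (fun ℓ hℓ => h.2 k ℓ
          (Nat.le_sub_one_of_lt (mem_range.1 hk)) (mem_Ico.1 hℓ).1
          (Nat.le_sub_one_of_lt (mem_Ico.1 hℓ).2)), Finset.sum_const, Nat.card_Ico,
          nsmul_eq_mul]
      rw [hβs, h1]
    rw [Finset.sum_congr rfl hinnersum, Finset.sum_add_distrib, Finset.sum_const,
      Finset.card_range, nsmul_eq_mul]
    congr 1
    rw [range_eq_Ico, Finset.sum_eq_sum_Ico_succ_bot (Nat.pos_of_ne_zero hd0)]
    have h1 : ‖inn v ((gT d ^ 0) v)‖ ^ 2 = 1 := by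
      rw [pow_zero]
      have h0 : (1 : (ZMod d → ℂ) ≃ₗ[ℂ] (ZMod d → ℂ)) v = v := rfl
      rw [h0, hs]
      simp
    have hαs : ∑ k ∈ Ico (0 + 1) d,
        ‖inn v ((gT d ^ k) v)‖ ^ 2 = ((d - 1 : ℕ) : ℝ) * α := by
      rw [Finset.sum_congr rfl (fun k hk => h.1 k (mem_Ico.1 hk).1
        (Nat.le_sub_one_of_lt (mem_Ico.1 hk).2)), Finset.sum_const, Nat.card_Ico,
        nsmul_eq_mul]
    rw [hαs, h1]
  rw [hsplit] at hreal
  have hcast : ((d - 1 : ℕ) : ℝ) = (d : ℝ) - 1 := by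
    rw [Nat.cast_sub (by omega)]; norm_num
  rw [hcast] at hreal
  have hd1 : (1 : ℝ) < (d : ℝ) := by exact_mod_cast (by omega : 1 < d)
  have hd1ne : (d : ℝ) - 1 ≠ 0 := by linarith
  have key : α + d * β = 1 := by
    have h2 : ((d : ℝ) - 1) * (α + d * β) = ((d : ℝ) - 1) * 1 := by
      linear_combination hreal
    exact mul_left_cancel₀ hd1ne h2
  have hdne : (d : ℝ) ≠ 0 := ne_of_gt hd0R
  have hd1pos : (0 : ℝ) < (d : ℝ) + 1 := by linarith
  refine ⟨?_, ?_, ?_⟩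
  · rw [eq_div_iff hdne]; linear_combination key
  · have hβ : β = (1 - α) / d := by rw [eq_div_iff hdne]; linear_combination key
    rw [hβ, lt_div_iff₀ hd0R, lt_div_iff₀ hd1pos]
    constructor <;> intro <;> linarith
  · have hβ : β = (1 - α) / d := by rw [eq_div_iff hdne]; linear_combination key
    rw [hβ, div_lt_iff₀ hd0R, div_lt_iff₀ hd1pos]
    constructor <;> intro <;> linarith
end
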